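/- Let p be a prime, A ⊆ F_p, and h an integer with 0 ≤ h ≤ |A|. Then |h^∧A| ≥ min{p, h(|A| - h) + 1}, where h^∧A is the set of sums of h pairwise distinct elements of A. -/
import Mathlib

open Finset

section LagrangePart
open Polynomial


lemma lagrange_sum_pow {F : Type*} [Field F] [DecidableEq F] (S : Finset F) (u : ℕ)
    (hu : u < S.card) :
    ∑ x ∈ S, x ^ u * Lagrange.nodalWeight S id x
      = if u = S.card - 1 then 1 else 0 := by
  classical
  have hinj : Set.InjOn (id : F → F) S := Function.injective_id.injOn
  have hdeg : ((X : F[X]) ^ u).degree < S.card := by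
    simpa [degree_X_pow] using (by exact_mod_cast hu : ((u : ℕ) : WithBot ℕ) < (S.card : WithBot ℕ))
  have hint := Lagrange.eq_interpolate hinj hdeg
  have hco := congrArg (fun q => Polynomial.coeff q (S.card - 1)) hint
  simp only [Lagrange.interpolate_apply] at hco
  rw [coeff_X_pow, Polynomial.finset_sum_coeff] at hco
  have hbasis : ∀ x ∈ S, (C (eval (id x) ((X : F[X]) ^ u)) * Lagrange.basis S id x).coeff
      (S.card - 1) = x ^ u * Lagrange.nodalWeight S id x := by
    intro x hx
    have hnd : (Lagrange.basis S id x).natDegree = S.card - 1 :=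
      Lagrange.natDegree_basis hinj hx
    rw [Polynomial.coeff_C_mul, ← hnd, Polynomial.coeff_natDegree]
    congr 1
    · simp
    unfold Lagrange.basis Lagrange.nodalWeight
    rw [leadingCoeff_prod]
    refine Finset.prod_congr rfl fun y hy => ?_
    unfold Lagrange.basisDivisor
    rw [leadingCoeff_mul, leadingCoeff_C, (monic_X_sub_C _).leadingCoeff, mul_one]
  rw [Finset.sum_congr rfl hbasis] at hco
  rw [← hco]
  simp [eq_comm]


end LagrangePart

section MainPart
open MvPolynomial

lemma coeff_eq_sum_grid {F : Type*} [Field F] [DecidableEq F] {n : ℕ} (S : Fin n → Finset F)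
    (t : Fin n → ℕ) (hcard : ∀ i, (S i).card = t i + 1)
    (f : MvPolynomial (Fin n) F) (hdeg : f.totalDegree ≤ ∑ i, t i) :
    coeff (Finsupp.equivFunOnFinite.symm t) f
      = ∑ x ∈ Fintype.piFinset S, eval x f * ∏ i, Lagrange.nodalWeight (S i) id (x i) := by
  classical
  set tF : Fin n →₀ ℕ := Finsupp.equivFunOnFinite.symm t with htF
  have htF' : ∀ i, tF i = t i := fun i => rfl
  refine Eq.symm ?_
  calc ∑ x ∈ Fintype.piFinset S, eval x f * ∏ i, Lagrange.nodalWeight (S i) id (x i)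
      = ∑ x ∈ Fintype.piFinset S, ∑ u ∈ f.support,
          coeff u f * ∏ i, (x i ^ u i * Lagrange.nodalWeight (S i) id (x i)) := by
        refine Finset.sum_congr rfl fun x _ => ?_
        rw [MvPolynomial.eval_eq', Finset.sum_mul]
        refine Finset.sum_congr rfl fun u _ => ?_
        rw [mul_assoc, ← Finset.prod_mul_distrib]
    _ = ∑ u ∈ f.support, coeff u f *
          ∏ i, ∑ y ∈ S i, y ^ u i * Lagrange.nodalWeight (S i) id y := by
        rw [Finset.sum_comm]
        refine Finset.sum_congr rfl fun u _ => ?_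
        rw [← Finset.mul_sum, Finset.prod_univ_sum]
    _ = ∑ u ∈ f.support, if u = tF then coeff u f else 0 := by
        refine Finset.sum_congr rfl fun u hu => ?_
        have husum : ∑ i, u i ≤ ∑ i, t i := by
          refine le_trans ?_ hdeg
          have := MvPolynomial.le_totalDegree hu
          rwa [Finsupp.sum_fintype] at this
          intro; rfl
        by_cases hut : u = tF
        · rw [if_pos hut]
          have hui : ∀ i, u i = t i := fun i => by rw [hut]; rfl
          have : ∀ i, (∑ y ∈ S i, y ^ u i * Lagrange.nodalWeight (S i) id y) = 1 := by
            intro i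
            rw [lagrange_sum_pow (S i) (u i) (by rw [hcard i, hui i]; omega)]
            rw [hcard i, hui i]
            simp
          rw [Finset.prod_congr rfl fun i _ => this i]
          simp
        · rw [if_neg hut]
          have hex : ∃ j, u j < t j := by
            by_contra hc
            push_neg at hc
            have : ∀ i ∈ Finset.univ, t i ≤ u i := fun i _ => hc i
            have heq : ∀ i ∈ Finset.univ, u i = t i := by
              intro i hi
              by_contra hne
              have : ∑ i, t i < ∑ i, u i :=
                Finset.sum_lt_sum this ⟨i, hi, lt_of_le_of_ne (hc i) (Ne.symm hne)⟩
              omega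
            exact hut (Finsupp.ext fun i => heq i (Finset.mem_univ i))
          obtain ⟨j, hj⟩ := hex
          rw [Finset.prod_eq_zero (Finset.mem_univ j), mul_zero]
          rw [lagrange_sum_pow (S j) (u j) (by rw [hcard j]; omega)]
          rw [hcard j]
          simp only [Nat.add_sub_cancel]
          rw [if_neg (by omega)]
    _ = coeff tF f := by
        rw [Finset.sum_ite_eq' f.support tF (fun u => coeff u f)]
        by_cases h : tF ∈ f.support
        · rw [if_pos h]
        · rw [if_neg h, eq_comm, ← MvPolynomial.notMem_support_iff]
          exact h

lemma coeff_eq_zero_of_vanish {F : Type*} [Field F] [DecidableEq F] {n : ℕ} (A : Finset F)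
    (t : Fin n → ℕ) (hts : ∀ i, t i + 1 ≤ A.card)
    (f : MvPolynomial (Fin n) F) (hdeg : f.totalDegree ≤ ∑ i, t i)
    (hz : ∀ x : Fin n → F, (∀ i, x i ∈ A) → eval x f = 0) :
    coeff (Finsupp.equivFunOnFinite.symm t) f = 0 := by
  classical
  have hS : ∀ i : Fin n, ∃ s ⊆ A, s.card = t i + 1 :=
    fun i => Finset.exists_subset_card_eq (hts i)
  choose S hSA hScard using hS
  rw [coeff_eq_sum_grid S t hScard f hdeg]
  refine Finset.sum_eq_zero fun x hx => ?_
  rw [hz x fun i => hSA i (Fintype.mem_piFinset.mp hx i), zero_mul]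


lemma prod_X_pow_eq {R : Type*} [CommSemiring R] {n : ℕ} (k : Fin n → ℕ) :
    (∏ i, (X i : MvPolynomial (Fin n) R) ^ k i)
      = monomial (Finsupp.equivFunOnFinite.symm k) 1 := by
  rw [monomial_eq, C_1, one_mul, Finsupp.prod_pow]
  rfl

lemma coeff_sum_X_pow {R : Type*} [CommRing R] {n : ℕ} (v : Fin n →₀ ℕ) (m : ℕ) :
    coeff v ((∑ i, X i : MvPolynomial (Fin n) R) ^ m)
      = if ∑ i, v i = m then (Nat.multinomial Finset.univ v : R) else 0 := by
  classical
  rw [Finset.sum_pow_eq_sum_piAntidiag, MvPolynomial.coeff_sum]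
  have hterm : ∀ k ∈ Finset.piAntidiag (Finset.univ : Finset (Fin n)) m,
      coeff v ((Nat.multinomial Finset.univ k : MvPolynomial (Fin n) R) * ∏ i, X i ^ k i)
        = if k = ⇑v then (Nat.multinomial Finset.univ k : R) else 0 := by
    intro k _
    rw [prod_X_pow_eq, ← MvPolynomial.C_eq_coe_nat, MvPolynomial.coeff_C_mul,
      MvPolynomial.coeff_monomial]
    have : (Finsupp.equivFunOnFinite.symm k = v) ↔ (k = ⇑v) := by
      constructor
      · intro hh; rw [← hh]; rfl
      · intro hh; apply Finsupp.equivFunOnFinite.symm_apply_eq.mpr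
        rw [hh]; rfl
    rw [if_congr this rfl rfl]
    split <;> simp_all
  rw [Finset.sum_congr rfl hterm, Finset.sum_ite_eq' _ (⇑v) (fun k => (Nat.multinomial Finset.univ k : R))]
  by_cases hs : ∑ i, v i = m
  · rw [if_pos hs, if_pos (Finset.mem_piAntidiag.mpr ⟨hs, fun i _ => Finset.mem_univ i⟩)]
  · rw [if_neg hs, if_neg (fun hmem => hs (Finset.mem_piAntidiag.mp hmem).1)]

open Equiv in
lemma key_coeff {h : ℕ} (t : Fin h → ℕ) (m : ℕ)
    (hm : m + ∑ i : Fin h, (i : ℕ) = ∑ i, t i) :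
    ((∏ i, (t i).factorial : ℕ) : ℤ) *
      coeff (Finsupp.equivFunOnFinite.symm t)
        (((∑ i, X i) ^ m * ∏ i : Fin h, ∏ j ∈ Finset.Ioi i, (X j - X i)) : MvPolynomial (Fin h) ℤ)
    = (m.factorial : ℤ) * ∏ i : Fin h, ∏ j ∈ Finset.Ioi i, ((t j : ℤ) - (t i : ℤ)) := by
  classical
  set tF := Finsupp.equivFunOnFinite.symm t with htF
  have hV : (∏ i : Fin h, ∏ j ∈ Finset.Ioi i, ((X j : MvPolynomial (Fin h) ℤ) - X i))
      = (Matrix.vandermonde fun i => (X i : MvPolynomial (Fin h) ℤ)).det :=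
    (Matrix.det_vandermonde _).symm
  rw [hV, Matrix.det_apply', Finset.mul_sum, MvPolynomial.coeff_sum, Finset.mul_sum]
  have hterm : ∀ σ : Equiv.Perm (Fin h),
      ((∏ i, (t i).factorial : ℕ) : ℤ) * coeff tF ((∑ i, X i) ^ m *
        (((Equiv.Perm.sign σ : ℤ) : MvPolynomial (Fin h) ℤ) *
          ∏ i, Matrix.vandermonde (fun i => (X i : MvPolynomial (Fin h) ℤ)) (σ i) i))
      = ((Equiv.Perm.sign σ : ℤ)) * ((m.factorial : ℤ) *
          ∏ i, (((t i).descFactorial ((σ.symm i : Fin h) : ℕ) : ℕ) : ℤ)) := by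
    intro σ
    set u : Fin h →₀ ℕ := Finsupp.equivFunOnFinite.symm fun j => ((σ.symm j : Fin h) : ℕ) with hu
    have hprod : (∏ i, Matrix.vandermonde (fun i => (X i : MvPolynomial (Fin h) ℤ)) (σ i) i)
        = monomial u 1 := by
      have h0 : ∀ i, Matrix.vandermonde (fun i => (X i : MvPolynomial (Fin h) ℤ)) (σ i) i
          = X (σ i) ^ (i : ℕ) := fun i => rfl
      rw [Finset.prod_congr rfl fun i _ => h0 i]
      have h1 : (∏ i, (X (σ i) : MvPolynomial (Fin h) ℤ) ^ (i : ℕ))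
          = ∏ j, (X j : MvPolynomial (Fin h) ℤ) ^ ((σ.symm j : Fin h) : ℕ) := by
        rw [← Equiv.prod_comp σ (fun j => (X j : MvPolynomial (Fin h) ℤ) ^ ((σ.symm j : Fin h) : ℕ))]
        exact Finset.prod_congr rfl fun i _ => by rw [Equiv.symm_apply_apply]
      rw [h1, prod_X_pow_eq]
    rw [hprod, mul_left_comm, ← eq_intCast (MvPolynomial.C : ℤ →+* MvPolynomial (Fin h) ℤ)
      ((Equiv.Perm.sign σ : ℤ)), MvPolynomial.coeff_C_mul, MvPolynomial.coeff_mul_monomial',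
      coeff_sum_X_pow]
    by_cases hle : u ≤ tF
    · have hle' : ∀ i, ((σ.symm i : Fin h) : ℕ) ≤ t i := fun i => hle i
      have hsub : ∀ i, (tF - u) i = t i - ((σ.symm i : Fin h) : ℕ) := fun i => rfl
      have h3 : ∑ i, ((σ.symm i : Fin h) : ℕ) = ∑ i : Fin h, (i : ℕ) :=
        Equiv.sum_comp σ.symm (fun j => (j : ℕ))
      have hsum : ∑ i, (tF - u) i = m := by
        have h2 : ∑ i, ((tF - u) i) + ∑ i, ((σ.symm i : Fin h) : ℕ) = ∑ i, t i := by
          rw [← Finset.sum_add_distrib]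
          exact Finset.sum_congr rfl fun i _ => by have := hle' i; rw [hsub i]; omega
        omega
      rw [if_pos hle, if_pos hsum, mul_one]
      have key : (∏ i, (t i).factorial) * Nat.multinomial Finset.univ ⇑(tF - u)
          = m.factorial * ∏ i, (t i).descFactorial ((σ.symm i : Fin h) : ℕ) := by
        have hfac : ∀ i, (t i).factorial
            = (t i).descFactorial ((σ.symm i : Fin h) : ℕ) * ((tF - u) i).factorial := by
          intro i
          rw [hsub i, ← Nat.factorial_mul_descFactorial (hle' i), mul_comm]
        rw [Finset.prod_congr rfl fun i _ => hfac i, Finset.prod_mul_distrib, mul_assoc,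
          Nat.multinomial_spec, hsum, mul_comm]
      have keyZ := congrArg (fun x : ℕ => (x : ℤ)) key
      push_cast at keyZ ⊢
      linear_combination ((Equiv.Perm.sign σ : ℤ)) * keyZ
    · rw [if_neg hle, mul_zero, mul_zero]
      have : ∃ i, t i < ((σ.symm i : Fin h) : ℕ) := by
        by_contra hc
        push_neg at hc
        exact hle fun i => hc i
      obtain ⟨i, hi⟩ := this
      rw [Finset.prod_eq_zero (Finset.mem_univ i)
        (by exact_mod_cast congrArg (fun x : ℕ => (x : ℤ)) (Nat.descFactorial_eq_zero_iff_lt.mpr hi))]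
      ring
  rw [Finset.sum_congr rfl fun σ _ => hterm σ]
  have hRHS : ∀ σ : Equiv.Perm (Fin h),
      ∏ i, (Matrix.of fun (i j : Fin h) => (descPochhammer ℤ (j : ℕ)).eval ((t i : ℤ))) (σ i) i
        = ∏ i, (((t i).descFactorial ((σ.symm i : Fin h) : ℕ) : ℕ) : ℤ) := by
    intro σ
    rw [← Equiv.prod_comp σ (fun j => (((t j).descFactorial ((σ.symm j : Fin h) : ℕ) : ℕ) : ℤ))]
    refine Finset.prod_congr rfl fun i _ => ?_
    rw [Matrix.of_apply, descPochhammer_eval_eq_descFactorial, Equiv.symm_apply_apply]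
  have h1 : ∏ i : Fin h, ∏ j ∈ Finset.Ioi i, ((t j : ℤ) - (t i : ℤ))
      = (Matrix.vandermonde fun i => (t i : ℤ)).det := (Matrix.det_vandermonde _).symm
  rw [h1, Matrix.det_eval_matrixOfPolynomials_eq_det_vandermonde (fun i => (t i : ℤ))
    (fun j => descPochhammer ℤ (j : ℕ)) (fun i => descPochhammer_natDegree _ _)
    (fun i => monic_descPochhammer _ _), Matrix.det_apply', Finset.mul_sum]
  refine Finset.sum_congr rfl fun σ _ => ?_
  rw [hRHS σ]
  push_cast
  ring

lemma coeff_zmod_ne_zero {p : ℕ} (hp : p.Prime) {h : ℕ} (t : Fin h → ℕ) (ht : StrictMono t)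
    (htp : ∀ i, t i < p) (m : ℕ) (hmp : m < p)
    (hm : m + ∑ i : Fin h, (i : ℕ) = ∑ i, t i) :
    coeff (Finsupp.equivFunOnFinite.symm t)
      (((∑ i, X i) ^ m * ∏ i : Fin h, ∏ j ∈ Finset.Ioi i, (X j - X i)) :
        MvPolynomial (Fin h) (ZMod p)) ≠ 0 := by
  classical
  have hmap : (((∑ i, X i) ^ m * ∏ i : Fin h, ∏ j ∈ Finset.Ioi i, (X j - X i)) :
      MvPolynomial (Fin h) (ZMod p))
      = MvPolynomial.map (Int.castRingHom (ZMod p))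
        (((∑ i, X i) ^ m * ∏ i : Fin h, ∏ j ∈ Finset.Ioi i, (X j - X i)) :
          MvPolynomial (Fin h) ℤ) := by
    simp [map_pow, map_sum, map_prod, map_sub]
  rw [hmap, MvPolynomial.coeff_map]
  intro h0
  have hdvd : (p : ℤ) ∣ coeff (Finsupp.equivFunOnFinite.symm t)
      (((∑ i, X i) ^ m * ∏ i : Fin h, ∏ j ∈ Finset.Ioi i, (X j - X i)) :
        MvPolynomial (Fin h) ℤ) := by
    rwa [← ZMod.intCast_zmod_eq_zero_iff_dvd]
  have hdvd2 : (p : ℤ) ∣ (m.factorial : ℤ) * ∏ i : Fin h, ∏ j ∈ Finset.Ioi i,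
      ((t j : ℤ) - (t i : ℤ)) := by
    rw [← key_coeff t m hm]
    exact Dvd.dvd.mul_left hdvd _
  have hpZ : Prime (p : ℤ) := Int.prime_iff_natAbs_prime.mpr (by simpa using hp)
  rcases hpZ.dvd_mul.mp hdvd2 with h1 | h1
  · rw [Int.natCast_dvd_natCast] at h1
    exact absurd ((Nat.Prime.dvd_factorial hp).mp h1) (by omega)
  · rw [Prime.dvd_finset_prod_iff hpZ] at h1
    obtain ⟨i, _, h2⟩ := h1
    rw [Prime.dvd_finset_prod_iff hpZ] at h2
    obtain ⟨j, hj, h3⟩ := h2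
    have hij : i < j := Finset.mem_Ioi.mp hj
    have h4 : ((t j : ℤ) - (t i : ℤ)) = ((t j - t i : ℕ) : ℤ) := by
      have := (ht hij).le
      push_cast [Nat.cast_sub this]
      ring
    rw [h4, Int.natCast_dvd_natCast] at h3
    have h5 : 0 < t j - t i := by have := ht hij; omega
    have h6 : t j - t i < p := by have := htp j; omega
    exact absurd (Nat.le_of_dvd h5 h3) (by omega)


section DegRed
variable {F : Type*} [CommRing F] [Nontrivial F] {h : ℕ}

lemma totalDegree_L_le : (∑ i, X i : MvPolynomial (Fin h) F).totalDegree ≤ 1 := by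
  refine le_trans (MvPolynomial.totalDegree_finset_sum _ _) ?_
  refine Finset.sup_le fun i _ => ?_
  rw [MvPolynomial.totalDegree_X]

lemma totalDegree_V_le :
    (∏ i : Fin h, ∏ j ∈ Finset.Ioi i, (X j - X i) : MvPolynomial (Fin h) F).totalDegree
      ≤ ∑ i : Fin h, (i : ℕ) := by
  have hcard : ∑ i : Fin h, (Finset.Ioi i).card = ∑ i : Fin h, (i : ℕ) := by
    have h1 : ∀ i : Fin h, (Finset.Ioi i).card = h - 1 - (i : ℕ) := by
      intro i
      rw [Fin.card_Ioi]
    rw [Finset.sum_congr rfl fun i _ => h1 i, Fin.sum_univ_eq_sum_range,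
      Fin.sum_univ_eq_sum_range (fun i => i)]
    exact Finset.sum_range_reflect (fun j => j) h
  rw [← hcard]
  refine le_trans (MvPolynomial.totalDegree_finset_prod _ _) ?_
  refine Finset.sum_le_sum fun i _ => ?_
  refine le_trans (MvPolynomial.totalDegree_finset_prod _ _) ?_
  have : ∀ j ∈ Finset.Ioi i, ((X j - X i : MvPolynomial (Fin h) F)).totalDegree ≤ 1 := by
    intro j _
    rw [sub_eq_add_neg]
    refine le_trans (MvPolynomial.totalDegree_add _ _) ?_
    rw [MvPolynomial.totalDegree_neg, MvPolynomial.totalDegree_X, MvPolynomial.totalDegree_X]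
    simp
  calc ∑ j ∈ Finset.Ioi i, ((X j - X i : MvPolynomial (Fin h) F)).totalDegree
      ≤ ∑ _j ∈ Finset.Ioi i, 1 := Finset.sum_le_sum this
    _ = (Finset.Ioi i).card := by simp

lemma sum_support_finsupp (t : Fin h → ℕ) :
    ∑ i ∈ (Finsupp.equivFunOnFinite.symm t).support, (Finsupp.equivFunOnFinite.symm t) i
      = ∑ i, t i :=
  Finset.sum_subset (Finset.subset_univ _)
    (fun i _ hi => Finsupp.notMem_support_iff.mp hi)

lemma coeff_prod_linear (C : Finset F) (t : Fin h → ℕ)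
    (hm : C.card + ∑ i : Fin h, (i : ℕ) = ∑ i, t i) :
    coeff (Finsupp.equivFunOnFinite.symm t)
      ((∏ c ∈ C, ((∑ i, X i) - MvPolynomial.C c)) *
        ∏ i : Fin h, ∏ j ∈ Finset.Ioi i, (X j - X i))
    = coeff (Finsupp.equivFunOnFinite.symm t)
      ((∑ i, X i) ^ C.card * ∏ i : Fin h, ∏ j ∈ Finset.Ioi i, (X j - X i)) := by
  classical
  set tF := Finsupp.equivFunOnFinite.symm t with htF
  set L : MvPolynomial (Fin h) F := ∑ i, X i with hL
  set V : MvPolynomial (Fin h) F := ∏ i : Fin h, ∏ j ∈ Finset.Ioi i, (X j - X i) with hV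
  have hrw : ∀ c ∈ C, L - MvPolynomial.C c = (fun c => -MvPolynomial.C c) c + (fun _ => L) c := by
    intro c _
    simp [sub_eq_neg_add]
  rw [Finset.prod_congr rfl hrw, Finset.prod_add]
  rw [Finset.sum_mul, MvPolynomial.coeff_sum]
  rw [Finset.sum_eq_single (∅ : Finset F)]
  · simp
  · intro T hT hTne
    have hTsub : T ⊆ C := Finset.mem_powerset.mp hT
    have hTcard : 0 < T.card := Finset.card_pos.mpr (Finset.nonempty_iff_ne_empty.mpr hTne)
    apply MvPolynomial.coeff_eq_zero_of_totalDegree_lt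
    have hC : (∏ c ∈ T, -MvPolynomial.C c : MvPolynomial (Fin h) F)
        = MvPolynomial.C (∏ c ∈ T, -c) := by
      rw [map_prod]
      simp
    have hconst : (∏ c ∈ C \ T, (fun _ : F => L) c) = L ^ (C.card - T.card) := by
      rw [Finset.prod_const, Finset.card_sdiff_of_subset hTsub]
    rw [hC, hconst]
    have hd1 : (MvPolynomial.C (∏ c ∈ T, -c) * L ^ (C.card - T.card) * V).totalDegree
        ≤ (C.card - T.card) + ∑ i : Fin h, (i : ℕ) := by
      refine le_trans (MvPolynomial.totalDegree_mul _ _) ?_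
      refine add_le_add ?_ totalDegree_V_le
      refine le_trans (MvPolynomial.totalDegree_mul _ _) ?_
      rw [MvPolynomial.totalDegree_C, zero_add]
      refine le_trans (MvPolynomial.totalDegree_pow _ _) ?_
      calc (C.card - T.card) * L.totalDegree ≤ (C.card - T.card) * 1 :=
            Nat.mul_le_mul_left _ totalDegree_L_le
        _ = C.card - T.card := by ring
    rw [sum_support_finsupp]
    have hTC : T.card ≤ C.card := Finset.card_le_card hTsub
    omega
  · intro hne
    exact absurd (Finset.empty_mem_powerset C) hne

end DegRed

lemma t_exists (h k c : ℕ) (hh1 : 1 ≤ h) (hhk : h ≤ k) (hc : c ≤ h * (k - h)) :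
    ∃ t : Fin h → ℕ, StrictMono t ∧ (∀ i, t i ≤ k - 1) ∧
      c + ∑ i : Fin h, (i : ℕ) = ∑ i, t i := by
  set w := k - h with hw
  set s : ℕ → ℕ := fun j => min w (c - w * (h - 1 - j)) with hs
  refine ⟨fun i => (i : ℕ) + s i, ?_, ?_, ?_⟩
  · intro i j hij
    show (i : ℕ) + s (i : ℕ) < (j : ℕ) + s (j : ℕ)
    have hmono : s (i : ℕ) ≤ s (j : ℕ) := by
      have : w * (h - 1 - (j : ℕ)) ≤ w * (h - 1 - (i : ℕ)) :=
        Nat.mul_le_mul_left _ (by omega)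
      simp only [hs]
      omega
    have : (i : ℕ) < (j : ℕ) := hij
    omega
  · intro i
    show (i : ℕ) + s (i : ℕ) ≤ k - 1
    have h1 : s (i : ℕ) ≤ w := min_le_left _ _
    have h2 : (i : ℕ) ≤ h - 1 := by omega
    omega
  · have haux : ∀ n : ℕ, ∑ j ∈ Finset.range n, (fun j => min w (c - w * j)) j
        = min c (w * n) := by
      intro n
      induction n with
      | zero => simp
      | succ n ih =>
        rw [Finset.sum_range_succ, ih, Nat.mul_succ]
        omega
    have hsum : ∑ i : Fin h, s (i : ℕ) = c := by
      rw [Fin.sum_univ_eq_sum_range (fun j => s j)]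
      show ∑ j ∈ Finset.range h, min w (c - w * (h - 1 - j)) = c
      have hr : ∑ j ∈ Finset.range h, min w (c - w * (h - 1 - j))
          = ∑ j ∈ Finset.range h, min w (c - w * j) :=
        Finset.sum_range_reflect (fun j => min w (c - w * j)) h
      rw [hr, haux h]
      have : h * w = w * h := Nat.mul_comm _ _
      omega
    show c + ∑ i : Fin h, (i : ℕ) = ∑ i : Fin h, ((i : ℕ) + s (i : ℕ))
    rw [Finset.sum_add_distrib, hsum]
    omega

/-- `kFoldSum A h` is `h^∧A`, the set of sums of `h` pairwise distinct elements of `A`. -/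
def kFoldSum {M : Type*} [AddCommMonoid M] [DecidableEq M] (A : Finset M) (h : ℕ) : Finset M :=
  (A.powersetCard h).image fun S => S.sum id

theorem dias_da_silva_hamidoune (p : ℕ) (hp : p.Prime) (A : Finset (ZMod p))
    (h : ℕ) (hh : h ≤ A.card) :
    min p (h * (A.card - h) + 1) ≤ (kFoldSum A h).card := by
  classical
  by_contra hlt
  push_neg at hlt
  have hp2 : 2 ≤ p := hp.two_le
  haveI : Fact p.Prime := ⟨hp⟩
  set k := A.card with hk
  have hkp : k ≤ p := by
    have := A.card_le_univ
    simpa [ZMod.card p] using this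
  have hne : (kFoldSum A h).Nonempty := by
    obtain ⟨S, hS1, hS2⟩ := Finset.exists_subset_card_eq hh
    exact ⟨S.sum id, Finset.mem_image_of_mem _ (Finset.mem_powersetCard.mpr ⟨hS1, hS2⟩)⟩
  have hpos : 1 ≤ (kFoldSum A h).card := Finset.card_pos.mpr hne
  set c := min (p - 1) (h * (k - h)) with hc
  have hcard_le : (kFoldSum A h).card ≤ c := by omega
  have hc1 : 1 ≤ c := le_trans hpos hcard_le
  have hh1 : 1 ≤ h := by
    rcases Nat.eq_zero_or_pos h with h0 | h0
    · subst h0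
      simp at hc
      omega
    · exact h0
  have hhk : h + 1 ≤ k := by
    by_contra hcon
    have heq : h = k := by omega
    rw [heq] at hc
    simp at hc
    omega
  have hcle : c ≤ h * (k - h) := min_le_right _ _
  have hcp : c ≤ p - 1 := min_le_left _ _
  obtain ⟨C, hCsub, hCuniv, hCcard⟩ :=
    Finset.exists_subsuperset_card_eq (Finset.subset_univ (kFoldSum A h)) hcard_le
      (by rw [Finset.card_univ, ZMod.card]; omega)
  obtain ⟨t, htmono, htle, htsum⟩ := t_exists h k c hh1 (by omega) hcle
  set L : MvPolynomial (Fin h) (ZMod p) := ∑ i, X i with hL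
  set V : MvPolynomial (Fin h) (ZMod p) :=
    ∏ i : Fin h, ∏ j ∈ Finset.Ioi i, (X j - X i) with hV
  set f : MvPolynomial (Fin h) (ZMod p) := (∏ cc ∈ C, (L - MvPolynomial.C cc)) * V with hf
  have hvanish : ∀ x : Fin h → ZMod p, (∀ i, x i ∈ A) → MvPolynomial.eval x f = 0 := by
    intro x hx
    have heval : MvPolynomial.eval x f
        = (∏ cc ∈ C, ((∑ i, x i) - cc)) * ∏ i : Fin h, ∏ j ∈ Finset.Ioi i, (x j - x i) := by
      simp [hf, hL, hV]
    rw [heval]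
    by_cases hinj : Function.Injective x
    · have hmem : (∑ i, x i) ∈ kFoldSum A h := by
        refine Finset.mem_image.mpr ⟨Finset.univ.image x, ?_, ?_⟩
        · refine Finset.mem_powersetCard.mpr ⟨?_, ?_⟩
          · intro y hy
            obtain ⟨i, _, rfl⟩ := Finset.mem_image.mp hy
            exact hx i
          · rw [Finset.card_image_of_injective _ hinj, Finset.card_univ, Fintype.card_fin]
        · rw [Finset.sum_image (fun a _ b _ hab => hinj hab)]
          simp
      exact mul_eq_zero_of_left (Finset.prod_eq_zero (hCsub hmem) (sub_self _)) _
    · rw [Function.not_injective_iff] at hinj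
      obtain ⟨a, b, hab, hne'⟩ := hinj
      rcases lt_or_gt_of_ne hne' with hl | hl
      · exact mul_eq_zero_of_right _ (Finset.prod_eq_zero (Finset.mem_univ a)
          (Finset.prod_eq_zero (Finset.mem_Ioi.mpr hl) (by rw [hab, sub_self])))
      · exact mul_eq_zero_of_right _ (Finset.prod_eq_zero (Finset.mem_univ b)
          (Finset.prod_eq_zero (Finset.mem_Ioi.mpr hl) (by rw [hab, sub_self])))
  have hdeg : f.totalDegree ≤ ∑ i, t i := by
    rw [hf]
    refine le_trans (MvPolynomial.totalDegree_mul _ _) ?_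
    have h1 : (∏ cc ∈ C, (L - MvPolynomial.C cc)).totalDegree ≤ C.card := by
      refine le_trans (MvPolynomial.totalDegree_finset_prod _ _) ?_
      calc ∑ cc ∈ C, (L - MvPolynomial.C cc).totalDegree ≤ ∑ _cc ∈ C, 1 := by
            refine Finset.sum_le_sum fun cc _ => ?_
            rw [sub_eq_add_neg]
            refine le_trans (MvPolynomial.totalDegree_add _ _) ?_
            refine max_le ?_ ?_
            · rw [hL]; exact totalDegree_L_le
            · rw [MvPolynomial.totalDegree_neg, MvPolynomial.totalDegree_C]; omega
        _ = C.card := by simp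
    have h2 : V.totalDegree ≤ ∑ i : Fin h, (i : ℕ) := by
      rw [hV]; exact totalDegree_V_le
    rw [hCcard] at h1
    omega
  have hzero : MvPolynomial.coeff (Finsupp.equivFunOnFinite.symm t) f = 0 :=
    coeff_eq_zero_of_vanish A t (fun i => by have := htle i; omega) f hdeg hvanish
  rw [hf, hL, hV, coeff_prod_linear C t (by rw [hCcard]; exact htsum), hCcard] at hzero
  exact coeff_zmod_ne_zero hp t htmono (fun i => by have := htle i; omega) c
    (by omega) htsum hzero

end MainPart
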